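/- Let H be a Hopf G-coalgebra over a field k and let α, β ∈ G. Regard H_{αβ} ⊗_k H_β as a left H_{αβ}-module by left multiplication on the first tensor factor (h·(x⊗m) = hx⊗m), and regard H_α ⊗_k H_β as a left H_{αβ}-module via Δ_{α,β} (h·(u⊗v) = h_{(1)}u ⊗ h_{(2)}v where Δ_{α,β}(h) = h_{(1)}⊗h_{(2)}). Then the k-linear map φ_{α,β} : H_{αβ} ⊗ H_β → H_α ⊗ H_β, h ⊗ m ↦ h_{(1)} ⊗ h_{(2)}m, is an isomorphism of H_{αβ}-modules, with inverse ψ_{α,β} : H_α ⊗ H_β → H_{αβ} ⊗ H_β, x ⊗ y ↦ x_{(1)} ⊗ S_{β⁻¹}(x_{(2)})y, where Δ_{αβ,β⁻¹}(x) = x_{(1)} ⊗ x_{(2)} (using H_α = H_{(αβ)β⁻¹}). -/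
import Mathlib


open scoped TensorProduct

/-- Transport along an equality of indices, as an algebra isomorphism. -/
def castAlg (k : Type) [CommSemiring k] {G : Type} {H : G → Type}
    [∀ γ : G, Ring (H γ)] [∀ γ : G, Algebra k (H γ)]
    {γ γ' : G} (h : γ = γ') : H γ ≃ₐ[k] H γ' := by
  subst h; exact AlgEquiv.refl

/-- A Hopf `G`-coalgebra over a field `k`. -/
structure HopfGCoalgebra (k G : Type) [Field k] [Group G] (H : G → Type)
    [∀ γ : G, Ring (H γ)] [∀ γ : G, Algebra k (H γ)] where
  Δ : ∀ α β : G, H (α * β) →ₐ[k] (H α ⊗[k] H β)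
  ε : H (1 : G) →ₐ[k] k
  S : ∀ γ : G, H γ →ₗ[k] H γ⁻¹
  coassoc : ∀ (α β γ : G) (x : H (α * β * γ)),
    (TensorProduct.map (Δ α β).toLinearMap LinearMap.id) (Δ (α * β) γ x)
      = (TensorProduct.assoc k (H α) (H β) (H γ)).symm
          ((TensorProduct.map LinearMap.id (Δ β γ).toLinearMap)
            (Δ α (β * γ) (castAlg k (mul_assoc α β γ) x)))
  counit_right : ∀ (α : G) (x : H (α * 1)),
    (TensorProduct.rid k (H α)) ((TensorProduct.map LinearMap.id ε.toLinearMap) (Δ α 1 x))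
      = castAlg k (mul_one α) x
  counit_left : ∀ (α : G) (x : H (1 * α)),
    (TensorProduct.lid k (H α)) ((TensorProduct.map ε.toLinearMap LinearMap.id) (Δ 1 α x))
      = castAlg k (one_mul α) x
  antipode_left : ∀ (α : G) (x : H (α⁻¹ * α)),
    (LinearMap.mul' k (H α))
      ((TensorProduct.map ((castAlg k (inv_inv α)).toLinearMap ∘ₗ S α⁻¹) LinearMap.id)
        (Δ α⁻¹ α x))
      = ε (castAlg k (inv_mul_cancel α) x) • 1
  antipode_right : ∀ (α : G) (x : H (α * α⁻¹)),
    (LinearMap.mul' k (H α))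
      ((TensorProduct.map LinearMap.id ((castAlg k (inv_inv α)).toLinearMap ∘ₗ S α⁻¹))
        (Δ α α⁻¹ x))
      = ε (castAlg k (mul_inv_cancel α) x) • 1

namespace HopfGCoalgebra

variable {k G : Type} [Field k] [Group G] {H : G → Type}
  [∀ γ : G, Ring (H γ)] [∀ γ : G, Algebra k (H γ)]

/-- A family of linear forms is a right `G`-integral. -/
def IsRightIntegral (D : HopfGCoalgebra k G H) (μ : ∀ γ : G, H γ →ₗ[k] k) : Prop :=
  ∀ (α β : G) (x : H (α * β)),
    (TensorProduct.lid k (H β)) ((TensorProduct.map (μ α) LinearMap.id) (D.Δ α β x))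
      = μ (α * β) x • 1

/-- A family of linear forms is a left `G`-integral. -/
def IsLeftIntegral (D : HopfGCoalgebra k G H) (μ : ∀ γ : G, H γ →ₗ[k] k) : Prop :=
  ∀ (α β : G) (x : H (α * β)),
    (TensorProduct.rid k (H α)) ((TensorProduct.map LinearMap.id (μ β)) (D.Δ α β x))
      = μ (α * β) x • 1

/-- A family of invertible elements is a pivot. -/
structure IsPivot (D : HopfGCoalgebra k G H) (g : ∀ γ : G, (H γ)ˣ) : Prop where
  delta : ∀ α β : G, D.Δ α β (g (α * β) : H (α * β)) = (g α : H α) ⊗ₜ[k] (g β : H β)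
  counit : D.ε (g 1 : H 1) = 1
  antipode : ∀ (α : G) (x : H α),
    castAlg k (inv_inv α) (D.S α⁻¹ (D.S α x)) = (g α : H α) * x * ((g α)⁻¹ : (H α)ˣ)

/-- `H` is unimodular if `H₁` admits a nonzero two-sided cointegral. -/
def IsUnimodular (D : HopfGCoalgebra k G H) : Prop :=
  ∃ Λ : H 1, Λ ≠ 0 ∧ ∀ h : H 1, h * Λ = D.ε h • Λ ∧ Λ * h = D.ε h • Λ

/-- A `G`-comodulus for a right `G`-integral `μ`. -/
structure IsComodulus (D : HopfGCoalgebra k G H) (μ : ∀ γ : G, H γ →ₗ[k] k)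
    (a : ∀ γ : G, (H γ)ˣ) : Prop where
  delta : ∀ α β : G, D.Δ α β (a (α * β) : H (α * β)) = (a α : H α) ⊗ₜ[k] (a β : H β)
  counit : D.ε (a 1 : H 1) = 1
  rel : ∀ (α β : G) (x : H (α * β)),
    (TensorProduct.rid k (H α)) ((TensorProduct.map LinearMap.id (μ β)) (D.Δ α β x))
      = μ (α * β) x • (a α : H α)

end HopfGCoalgebra

set_option linter.unusedSectionVars false
section Aux
variable {k G : Type} [Field k] [Group G] {H : G → Type}
  [∀ γ : G, Ring (H γ)] [∀ γ : G, Algebra k (H γ)]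

lemma castAlg_rfl {γ : G} (h : γ = γ) (x : H γ) : castAlg k h x = x := rfl

lemma castAlg_trans {γ γ' γ'' : G} (e : γ = γ') (e' : γ' = γ'') (x : H γ) :
    castAlg k e' (castAlg k e x) = castAlg k (e.trans e') x := by
  subst e'; subst e; rfl

lemma castAlg_toLinearMap_rfl {γ : G} (h : γ = γ) :
    (castAlg (H := H) k h).toLinearMap = LinearMap.id := rfl

lemma map_id_comp {M N P Q : Type} [AddCommGroup M] [Module k M] [AddCommGroup N] [Module k N]
    [AddCommGroup P] [Module k P] [AddCommGroup Q] [Module k Q]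
    (f : P →ₗ[k] Q) (g : N →ₗ[k] P) (u : M ⊗[k] N) :
    TensorProduct.map LinearMap.id f (TensorProduct.map LinearMap.id g u)
      = TensorProduct.map LinearMap.id (f ∘ₗ g) u := by
  induction u with
  | zero => simp
  | tmul a b => simp
  | add u v hu hv => simp [hu, hv]

lemma map_comp_id {M N P Q : Type} [AddCommGroup M] [Module k M] [AddCommGroup N] [Module k N]
    [AddCommGroup P] [Module k P] [AddCommGroup Q] [Module k Q]
    (f : P →ₗ[k] Q) (g : M →ₗ[k] P) (u : M ⊗[k] N) :
    TensorProduct.map f LinearMap.id (TensorProduct.map g LinearMap.id u)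
      = TensorProduct.map (f ∘ₗ g) LinearMap.id u := by
  induction u with
  | zero => simp
  | tmul a b => simp
  | add u v hu hv => simp [hu, hv]

lemma map_mulRight_eq {M B : Type} [AddCommGroup M] [Module k M] [Ring B] [Algebra k B]
    (u : M ⊗[k] B) (s : B) :
    TensorProduct.map LinearMap.id (LinearMap.mulRight k s) u
      = TensorProduct.map LinearMap.id (LinearMap.mul' k B)
          ((TensorProduct.assoc k M B B) (u ⊗ₜ[k] s)) := by
  induction u with
  | zero => simp
  | tmul a b => simp
  | add u v hu hv => simp [TensorProduct.add_tmul, hu, hv]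

lemma assoc_tmul_map {M N P Q : Type} [AddCommGroup M] [Module k M] [AddCommGroup N] [Module k N]
    [AddCommGroup P] [Module k P] [AddCommGroup Q] [Module k Q]
    (g : P →ₗ[k] Q) (u : M ⊗[k] N) (c : P) :
    (TensorProduct.assoc k M N Q) (u ⊗ₜ[k] g c)
      = TensorProduct.map LinearMap.id (TensorProduct.map LinearMap.id g)
          ((TensorProduct.assoc k M N P) (u ⊗ₜ[k] c)) := by
  induction u with
  | zero => simp
  | tmul a b => simp
  | add u v hu hv => simp [TensorProduct.add_tmul, hu, hv]

lemma assoc_map_left {M N P Q : Type} [AddCommGroup M] [Module k M] [AddCommGroup N] [Module k N]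
    [AddCommGroup P] [Module k P] [AddCommGroup Q] [Module k Q]
    (g : N →ₗ[k] Q) (u : M ⊗[k] (N ⊗[k] P)) :
    (TensorProduct.assoc k M Q P)
        ((TensorProduct.map (TensorProduct.map LinearMap.id g) LinearMap.id)
          ((TensorProduct.assoc k M N P).symm u))
      = (TensorProduct.map LinearMap.id (TensorProduct.map g LinearMap.id)) u := by
  induction u with
  | zero => simp
  | tmul a w =>
    induction w with
    | zero => simp
    | tmul b c => simp
    | add w1 w2 h1 h2 => simp [TensorProduct.tmul_add, h1, h2]
  | add u v hu hv => simp [hu, hv]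

lemma map_toSpan {M N A : Type} [AddCommGroup M] [Module k M] [AddCommGroup N] [Module k N]
    [Ring A] [Algebra k A] (f : N →ₗ[k] k) (u : M ⊗[k] N) :
    TensorProduct.map LinearMap.id (LinearMap.toSpanSingleton k A 1 ∘ₗ f) u
      = (TensorProduct.rid k M (TensorProduct.map LinearMap.id f u)) ⊗ₜ[k] (1 : A) := by
  induction u with
  | zero => simp
  | tmul a b =>
    rw [TensorProduct.map_tmul, TensorProduct.map_tmul, LinearMap.comp_apply,
      LinearMap.toSpanSingleton_apply, LinearMap.id_coe, id_eq, TensorProduct.rid_tmul,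
      TensorProduct.tmul_smul, TensorProduct.smul_tmul']
  | add u v hu hv => simp [hu, hv, TensorProduct.add_tmul]

lemma mul_one_tmul {A B : Type} [Ring A] [Ring B] [Algebra k A] [Algebra k B]
    (t : A ⊗[k] B) (s : B) :
    t * ((1 : A) ⊗ₜ[k] s) = TensorProduct.map LinearMap.id (LinearMap.mulRight k s) t := by
  induction t with
  | zero => simp
  | tmul a b => simp [Algebra.TensorProduct.tmul_mul_tmul]
  | add t1 t2 h1 h2 => simp [add_mul, h1, h2]

end Aux

section Keys
set_option linter.unusedSectionVars false
variable {k G : Type} [Field k] [Group G] {H : G → Type}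
  [∀ γ : G, Ring (H γ)] [∀ γ : G, Algebra k (H γ)]

lemma Δ_cast_snd (D : HopfGCoalgebra k G H) (α : G) {γ γ' : G} (e : γ = γ')
    (h : α * γ = α * γ') (x : H (α * γ)) :
    D.Δ α γ' (castAlg k h x)
      = TensorProduct.map LinearMap.id (castAlg k e).toLinearMap (D.Δ α γ x) := by
  subst e
  rw [castAlg_rfl, castAlg_toLinearMap_rfl, TensorProduct.map_id]
  rfl

lemma Δ_cast_fst (D : HopfGCoalgebra k G H) {γ γ' : G} (δ : G) (e : γ = γ')
    (h : γ * δ = γ' * δ) (x : H (γ * δ)) :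
    D.Δ γ' δ (castAlg k h x)
      = TensorProduct.map (castAlg k e).toLinearMap LinearMap.id (D.Δ γ δ x) := by
  subst e
  rw [castAlg_rfl, castAlg_toLinearMap_rfl, TensorProduct.map_id]
  rfl

lemma key1 (D : HopfGCoalgebra k G H) (α β : G) (x' : H (α * β * β⁻¹)) :
    TensorProduct.map LinearMap.id (LinearMap.mul' k (H β))
      (TensorProduct.map LinearMap.id
          (TensorProduct.map LinearMap.id ((castAlg k (inv_inv β)).toLinearMap ∘ₗ D.S β⁻¹))
        ((TensorProduct.assoc k (H α) (H β) (H β⁻¹))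
          (TensorProduct.map (D.Δ α β).toLinearMap LinearMap.id (D.Δ (α * β) β⁻¹ x'))))
      = (castAlg k (mul_inv_cancel_right α β) x') ⊗ₜ[k] (1 : H β) := by
  rw [D.coassoc α β β⁻¹ x', LinearEquiv.apply_symm_apply, map_id_comp, map_id_comp]
  have hanti : (LinearMap.mul' k (H β) ∘ₗ
        TensorProduct.map LinearMap.id ((castAlg k (inv_inv β)).toLinearMap ∘ₗ D.S β⁻¹)) ∘ₗ
        (D.Δ β β⁻¹).toLinearMap
      = LinearMap.toSpanSingleton k (H β) 1 ∘ₗ D.ε.toLinearMap ∘ₗ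
        (castAlg k (mul_inv_cancel β)).toLinearMap := by
    ext w
    simp only [LinearMap.comp_apply, AlgHom.toLinearMap_apply, AlgEquiv.toLinearMap_apply,
      LinearMap.toSpanSingleton_apply]
    exact D.antipode_right β w
  rw [hanti, ← LinearMap.comp_assoc, ← map_id_comp,
    ← Δ_cast_snd D α (mul_inv_cancel β) (by rw [mul_inv_cancel])
      (castAlg k (mul_assoc α β β⁻¹) x'),
    map_toSpan, D.counit_right α, castAlg_trans, castAlg_trans]

lemma key2 (D : HopfGCoalgebra k G H) (α β : G) (h : H (α * β)) :
    TensorProduct.map LinearMap.id (LinearMap.mul' k (H β))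
      ((TensorProduct.assoc k (H (α * β)) (H β) (H β))
        (TensorProduct.map
          (TensorProduct.map LinearMap.id ((castAlg k (inv_inv β)).toLinearMap ∘ₗ D.S β⁻¹) ∘ₗ
            (D.Δ (α * β) β⁻¹).toLinearMap ∘ₗ
            (castAlg k (mul_inv_cancel_right α β).symm).toLinearMap)
          LinearMap.id (D.Δ α β h)))
      = h ⊗ₜ[k] (1 : H β) := by
  rw [← map_comp_id, ← map_comp_id,
    ← Δ_cast_fst D β (mul_inv_cancel_right α β).symm (by rw [mul_inv_cancel_right]) h,
    D.coassoc (α * β) β⁻¹ β, assoc_map_left, map_id_comp, map_id_comp]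
  have hanti : (LinearMap.mul' k (H β) ∘ₗ
        TensorProduct.map ((castAlg k (inv_inv β)).toLinearMap ∘ₗ D.S β⁻¹) LinearMap.id) ∘ₗ
        (D.Δ β⁻¹ β).toLinearMap
      = LinearMap.toSpanSingleton k (H β) 1 ∘ₗ D.ε.toLinearMap ∘ₗ
        (castAlg k (inv_mul_cancel β)).toLinearMap := by
    ext w
    simp only [LinearMap.comp_apply, AlgHom.toLinearMap_apply, AlgEquiv.toLinearMap_apply,
      LinearMap.toSpanSingleton_apply]
    exact D.antipode_left β w
  rw [hanti, ← LinearMap.comp_assoc, ← map_id_comp,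
    ← Δ_cast_snd D (α * β) (inv_mul_cancel β) (by rw [inv_mul_cancel]),
    map_toSpan, D.counit_right (α * β), castAlg_trans, castAlg_trans, castAlg_trans]
  rfl


end Keys

set_option synthInstance.maxHeartbeats 1000000
set_option maxHeartbeats 1000000

open HopfGCoalgebra in
/-- The map `φ_{α,β} : H_{αβ} ⊗ H_β → H_α ⊗ H_β, h ⊗ m ↦ h₍₁₎ ⊗ h₍₂₎m` is an isomorphism of
`H_{αβ}`-modules (where `H_{αβ}` acts on the source by left multiplication on the first factor
and on the target through `Δ_{α,β}`), with inverse `ψ_{α,β} : x ⊗ y ↦ x₍₁₎ ⊗ S_{β⁻¹}(x₍₂₎)y`. -/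
theorem phi_isom_of_modules
    {k G : Type} [Field k] [Group G] {H : G → Type}
    [∀ γ : G, Ring (H γ)] [∀ γ : G, Algebra k (H γ)]
    (D : HopfGCoalgebra k G H) (α β : G)
    (φ : (H (α * β) ⊗[k] H β) →ₗ[k] (H α ⊗[k] H β))
    (ψ : (H α ⊗[k] H β) →ₗ[k] (H (α * β) ⊗[k] H β))
    (hφ : ∀ (h : H (α * β)) (m : H β),
      φ (h ⊗ₜ[k] m) = D.Δ α β h * ((1 : H α) ⊗ₜ[k] m))
    (hψ : ∀ (x : H α) (y : H β),
      ψ (x ⊗ₜ[k] y)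
        = (TensorProduct.map LinearMap.id
            (LinearMap.mulRight k y ∘ₗ (castAlg k (inv_inv β)).toLinearMap ∘ₗ D.S β⁻¹))
          (D.Δ (α * β) β⁻¹ (castAlg k (mul_inv_cancel_right α β).symm x))) :
    (∀ (h : H (α * β)) (z : H (α * β) ⊗[k] H β),
        φ ((TensorProduct.map (LinearMap.mulLeft k h) LinearMap.id) z) = D.Δ α β h * φ z)
    ∧ φ.comp ψ = LinearMap.id ∧ ψ.comp φ = LinearMap.id := by
  have hφ' : ∀ (h : H (α * β)) (m : H β),
      φ (h ⊗ₜ[k] m) = TensorProduct.map LinearMap.id (LinearMap.mulRight k m) (D.Δ α β h) := by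
    intro h m
    rw [hφ, mul_one_tmul]
  refine ⟨?_, ?_, ?_⟩
  · intro h z
    induction z with
    | zero => simp
    | tmul h' m =>
      rw [TensorProduct.map_tmul, LinearMap.mulLeft_apply, LinearMap.id_coe, id_eq,
        hφ, hφ, map_mul, mul_assoc]
    | add z1 z2 h1 h2 => simp only [map_add, h1, h2, mul_add]
  · apply TensorProduct.ext'
    intro x y
    have φ_mulRight : ∀ (t : H (α * β) ⊗[k] H β) (y : H β),
        φ (TensorProduct.map LinearMap.id (LinearMap.mulRight k y) t)
          = φ t * ((1 : H α) ⊗ₜ[k] y) := by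
      intro t y
      induction t with
      | zero => simp
      | tmul h m =>
        rw [TensorProduct.map_tmul, LinearMap.id_coe, id_eq, LinearMap.mulRight_apply,
          hφ, hφ, mul_assoc, Algebra.TensorProduct.tmul_mul_tmul, one_mul]
      | add t1 t2 h1 h2 => simp only [map_add, h1, h2, add_mul]
    have step1 : ∀ t : H (α * β) ⊗[k] H β⁻¹,
        φ (TensorProduct.map LinearMap.id ((castAlg k (inv_inv β)).toLinearMap ∘ₗ D.S β⁻¹) t)
          = TensorProduct.map LinearMap.id (LinearMap.mul' k (H β))
              (TensorProduct.map LinearMap.id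
                  (TensorProduct.map LinearMap.id
                    ((castAlg k (inv_inv β)).toLinearMap ∘ₗ D.S β⁻¹))
                ((TensorProduct.assoc k (H α) (H β) (H β⁻¹))
                  (TensorProduct.map (D.Δ α β).toLinearMap LinearMap.id t))) := by
      intro t
      induction t with
      | zero => simp
      | tmul a b =>
        simp only [TensorProduct.map_tmul, LinearMap.id_coe, id_eq, AlgHom.toLinearMap_apply]
        rw [hφ', map_mulRight_eq, assoc_tmul_map]
      | add t1 t2 h1 h2 => simp only [map_add, h1, h2]
    simp only [LinearMap.comp_apply, LinearMap.id_coe, id_eq]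
    rw [hψ, ← map_id_comp, φ_mulRight, step1,
      key1 D α β (castAlg k (mul_inv_cancel_right α β).symm x), castAlg_trans, castAlg_rfl,
      Algebra.TensorProduct.tmul_mul_tmul, one_mul, mul_one]
  · apply TensorProduct.ext'
    intro h m
    have ψ_mulRight : ∀ (t : H α ⊗[k] H β) (m : H β),
        ψ (TensorProduct.map LinearMap.id (LinearMap.mulRight k m) t)
          = TensorProduct.map LinearMap.id (LinearMap.mulRight k m) (ψ t) := by
      intro t m
      induction t with
      | zero => simp
      | tmul x y =>
        rw [TensorProduct.map_tmul, LinearMap.id_coe, id_eq, LinearMap.mulRight_apply,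
          hψ, hψ, map_id_comp, LinearMap.mulRight_mul, LinearMap.comp_assoc]
      | add t1 t2 h1 h2 => simp only [map_add, h1, h2]
    have step2 : ∀ t : H α ⊗[k] H β, ψ t
        = TensorProduct.map LinearMap.id (LinearMap.mul' k (H β))
            ((TensorProduct.assoc k (H (α * β)) (H β) (H β))
              (TensorProduct.map
                (TensorProduct.map LinearMap.id
                    ((castAlg k (inv_inv β)).toLinearMap ∘ₗ D.S β⁻¹) ∘ₗ
                  (D.Δ (α * β) β⁻¹).toLinearMap ∘ₗ
                  (castAlg k (mul_inv_cancel_right α β).symm).toLinearMap)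
                LinearMap.id t)) := by
      intro t
      induction t with
      | zero => simp
      | tmul x y =>
        rw [hψ, ← map_id_comp, map_mulRight_eq, TensorProduct.map_tmul]
        simp only [LinearMap.comp_apply, LinearMap.id_coe, id_eq, AlgHom.toLinearMap_apply,
          AlgEquiv.toLinearMap_apply]
      | add t1 t2 h1 h2 => simp only [map_add, h1, h2]
    simp only [LinearMap.comp_apply, LinearMap.id_coe, id_eq]
    rw [hφ', ψ_mulRight, step2, key2, TensorProduct.map_tmul, LinearMap.id_coe, id_eq,
      LinearMap.mulRight_apply, one_mul]
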